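/- With the setup of constrained-path AFQMC importance sampling: if ⟨Ψ_tr, B(x)Φ⟩ ≤ 0 for some x (a sign problem occurs), then for any x with P̃(x) > 0, the difference ⟨Ψ_tr, B̃(x)Φ⟩ − ⟨Ψ_tr, exp(-ΔτH)Φ⟩ equals −Σ_{x : P̃(x)=0} P(x)·⟨Ψ_tr, B(x)Φ⟩, and this quantity is ≥ 0. Hence the constrained-path walker overlap is systematically biased upward relative to the exact propagation. -/

import Mathlib

open scoped Matrix BigOperators

/-- With a sign problem, the constrained-path walker overlap is biased upward relative to
exact propagation, by exactly minus the discarded contributions. -/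
theorem cpAFQMC_sign_problem_bias {n : ℕ} {X : Type*} [Fintype X]
    (H : Matrix (Fin n) (Fin n) ℝ) (hH : H.IsSymm) (Δτ : ℝ) (hΔτ : 0 < Δτ)
    (P : X → ℝ) (hP0 : ∀ x, 0 ≤ P x) (hP1 : ∑ x, P x = 1)
    (B : X → Matrix (Fin n) (Fin n) ℝ)
    (hdecomp : NormedSpace.exp (-(Δτ • H)) = ∑ x, P x • B x)
    (Ψtr Φ : Fin n → ℝ) (hΦ : 0 < Ψtr ⬝ᵥ Φ)
    (hsign : ∃ x, Ψtr ⬝ᵥ (B x).mulVec Φ ≤ 0)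
    (N : ℝ) (hNpos : 0 < N)
    (hN : N = ∑ x, (max (Ψtr ⬝ᵥ (B x).mulVec Φ) 0 / (Ψtr ⬝ᵥ Φ)) * P x)
    (Ptilde : X → ℝ)
    (hPt : ∀ x, Ptilde x = (1 / N) * (max (Ψtr ⬝ᵥ (B x).mulVec Φ) 0 / (Ψtr ⬝ᵥ Φ)) * P x) :
    ∀ x, 0 < Ptilde x →
      (Ψtr ⬝ᵥ ((P x / Ptilde x) • B x).mulVec Φ
          - Ψtr ⬝ᵥ (NormedSpace.exp (-(Δτ • H))).mulVec Φ
        = -(∑ y, if Ptilde y = 0 then P y * (Ψtr ⬝ᵥ (B y).mulVec Φ) else 0)) ∧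
      0 ≤ Ψtr ⬝ᵥ ((P x / Ptilde x) • B x).mulVec Φ
          - Ψtr ⬝ᵥ (NormedSpace.exp (-(Δτ • H))).mulVec Φ := by
  intro x hx
  have hON : (Ψtr ⬝ᵥ Φ) ≠ 0 := ne_of_gt hΦ
  have hNne : N ≠ 0 := ne_of_gt hNpos
  have hNO : N * (Ψtr ⬝ᵥ Φ) ≠ 0 := mul_ne_zero hNne hON
  set o : X → ℝ := fun y => Ψtr ⬝ᵥ (B y).mulVec Φ with ho
  have hform : ∀ y, Ptilde y = (max (o y) 0 * P y) / (N * (Ψtr ⬝ᵥ Φ)) := by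
    intro y
    rw [hPt y]
    field_simp
    simp only [ho]; ring
  have hsumMV : (∑ y : X, P y • B y) *ᵥ Φ = ∑ y : X, (P y • B y) *ᵥ Φ := by
    classical
    induction (Finset.univ : Finset X) using Finset.cons_induction with
    | empty => simp
    | cons a s ha ih => rw [Finset.sum_cons, Finset.sum_cons, Matrix.add_mulVec, ih]
  have hexp : Ψtr ⬝ᵥ (NormedSpace.exp (-(Δτ • H))).mulVec Φ = ∑ y, P y * o y := by
    show Ψtr ⬝ᵥ (NormedSpace.exp (-(Δτ • H))) *ᵥ Φ = ∑ y, P y * o y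
    have hds : ∀ g : X → Fin n → ℝ, Ψtr ⬝ᵥ (∑ y : X, g y) = ∑ y : X, Ψtr ⬝ᵥ g y := by
      intro g
      simp only [dotProduct, Finset.sum_apply, Finset.mul_sum]
      exact Finset.sum_comm
    rw [hdecomp, hsumMV, hds]
    exact Finset.sum_congr rfl fun y _ => by
      rw [Matrix.smul_mulVec, dotProduct_smul, smul_eq_mul]
  -- positivity at x
  have hxnum : 0 < max (o x) 0 * P x := by
    rw [hform x] at hx
    rcases div_pos_iff.mp hx with ⟨h1, _⟩ | ⟨_, h2⟩
    · exact h1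
    · nlinarith
  have hPx : 0 < P x := by
    nlinarith [le_max_right (o x) (0:ℝ)]
  have hmx : 0 < max (o x) 0 := by nlinarith [hP0 x]
  have hox : 0 < o x := by
    by_contra h
    push_neg at h
    rw [max_eq_right h] at hmx
    exact lt_irrefl 0 hmx
  have hterm : (P x / Ptilde x) * o x = N * (Ψtr ⬝ᵥ Φ) := by
    rw [hform x, max_eq_left hox.le]
    field_simp
  have hNOsum : N * (Ψtr ⬝ᵥ Φ) = ∑ y, max (o y) 0 * P y := by
    rw [hN, Finset.sum_mul]
    exact Finset.sum_congr rfl fun y _ => by field_simp; simp only [ho]; ring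
  have hdiff : Ψtr ⬝ᵥ ((P x / Ptilde x) • B x).mulVec Φ
      - Ψtr ⬝ᵥ (NormedSpace.exp (-(Δτ • H))).mulVec Φ
      = ∑ y, (max (o y) 0 - o y) * P y := by
    rw [Matrix.smul_mulVec, dotProduct_smul, smul_eq_mul]
    rw [hterm, hexp, hNOsum, ← Finset.sum_sub_distrib]
    exact Finset.sum_congr rfl fun y _ => by ring
  have hkey : ∑ y, (max (o y) 0 - o y) * P y
      = -(∑ y, if Ptilde y = 0 then P y * o y else 0) := by
    rw [← Finset.sum_neg_distrib]
    refine Finset.sum_congr rfl fun y _ => ?_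
    by_cases hy : Ptilde y = 0
    · have h0 : max (o y) 0 * P y = 0 := by
        have := hform y
        rw [hy] at this
        have := (div_eq_zero_iff.mp this.symm).resolve_right hNO
        linarith
      simp only [hy, if_true]
      linarith [h0]
    · have hne : max (o y) 0 * P y ≠ 0 := by
        intro h0
        apply hy
        rw [hform y, h0, zero_div]
      have hmy : max (o y) 0 ≠ 0 := fun h => hne (by rw [h, zero_mul])
      have hmy' : 0 < max (o y) 0 := lt_of_le_of_ne (le_max_right _ _) (Ne.symm hmy)
      have hoy : 0 < o y := by
        by_contra h
        push_neg at h
        rw [max_eq_right h] at hmy'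
        exact lt_irrefl 0 hmy'
      simp only [hy, if_false]
      rw [max_eq_left hoy.le]
      ring
  constructor
  · rw [hdiff, hkey]
  · rw [hdiff]
    exact Finset.sum_nonneg fun y _ =>
      mul_nonneg (sub_nonneg.mpr (le_max_left _ _)) (hP0 y)
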